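/- Let k ≥ 1, 0 ≤ ν ≤ k-1, Q(x) = ∑_{j=0}^{ν} C(k-1+j, j) x^j, R(x) = (1-x)^k Q(x), and g(x) = R(x) + R(1-x). Then R'(x) = -(k+ν) C(k-1+ν, ν) (1-x)^{k-1} x^{ν}, g is decreasing on [0,1/2] and increasing on [1/2,1], min_{[0,1]} g = g(1/2) = 2^{1-k} ∑_{j=0}^{ν} C(k-1+j, j) 2^{-j} > 0, and max_{[0,1]} g = g(0) = g(1) = 1. -/

import Mathlib

section aux
open Finset Set
lemma nat_id (k j : ℕ) (hk : 1 ≤ k) :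
    (j + 1) * (k + j).choose (j + 1) = (k + j) * (k - 1 + j).choose j := by
  have h := Nat.add_one_mul_choose_eq (k - 1 + j) j
  have hkj : k - 1 + j + 1 = k + j := by omega
  rw [hkj] at h
  rw [h, Nat.mul_comm]

lemma key (k : ℕ) (hk : 1 ≤ k) (ν : ℕ) (x : ℝ) :
    (1 - x) * (∑ j ∈ range (ν + 1), ((k - 1 + j).choose j : ℝ) * ((j : ℝ) * x ^ (j - 1)))
      - (k : ℝ) * (∑ j ∈ range (ν + 1), ((k - 1 + j).choose j : ℝ) * x ^ j)
    = -((k + ν : ℕ) : ℝ) * ((k - 1 + ν).choose ν : ℝ) * x ^ ν := by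
  induction ν with
  | zero => simp
  | succ n ih =>
    rw [Finset.sum_range_succ _ (n + 1), Finset.sum_range_succ _ (n + 1)]
    have hkn : k - 1 + (n + 1) = k + n := by omega
    have hid : ((n:ℝ) + 1) * ((k + n).choose (n + 1) : ℝ)
        = ((k:ℝ) + (n:ℝ)) * ((k - 1 + n).choose n : ℝ) := by
      exact_mod_cast nat_id k n hk
    rw [hkn]
    have hx : x ^ (n + 1 - 1) = x ^ n := by norm_num
    rw [hx]
    push_cast at ih ⊢
    linear_combination ih + x ^ n * hid

lemma hRd (k ν : ℕ) (hk : 1 ≤ k) (Q R : ℝ → ℝ)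
    (hQ : ∀ x : ℝ, Q x = ∑ j ∈ range (ν + 1), (Nat.choose (k - 1 + j) j : ℝ) * x ^ j)
    (hR : ∀ x : ℝ, R x = (1 - x) ^ k * Q x) : ∀ x : ℝ, HasDerivAt R
    (-((k + ν : ℕ) : ℝ) * ((k - 1 + ν).choose ν : ℝ) * (1 - x) ^ (k - 1) * x ^ ν) x := by
  intro x
  have hRe : R = fun x => (1 - x) ^ k * ∑ j ∈ range (ν + 1), ((k - 1 + j).choose j : ℝ) * x ^ j :=
    funext fun x => by rw [hR x, hQ x]
  rw [hRe]
  have h1 : HasDerivAt (fun y : ℝ => 1 - y) (-1) x := (hasDerivAt_id x).const_sub 1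
  have hP : HasDerivAt (fun y : ℝ => (1 - y) ^ k) (-((k:ℝ) * (1 - x) ^ (k - 1))) x := by
    have := (hasDerivAt_pow k (1 - x)).comp x h1
    exact this.congr_deriv (by ring)
  have hQd : HasDerivAt (fun y : ℝ => ∑ j ∈ range (ν + 1), ((k - 1 + j).choose j : ℝ) * y ^ j)
      (∑ j ∈ range (ν + 1), ((k - 1 + j).choose j : ℝ) * ((j : ℝ) * x ^ (j - 1))) x :=
    HasDerivAt.fun_sum fun j _ => (hasDerivAt_pow j x).const_mul _
  have := hP.mul hQd
  refine this.congr_deriv (Eq.symm ?_)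
  have hpow : (1 - x) ^ k = (1 - x) ^ (k - 1) * (1 - x) := by
    rw [← pow_succ]; congr 1; omega
  have hkey := key k hk ν x
  rw [hpow]
  linear_combination (-(1 - x) ^ (k - 1)) * hkey

lemma hgd (k ν : ℕ) (hk : 1 ≤ k) (Q R g : ℝ → ℝ)
    (hQ : ∀ x : ℝ, Q x = ∑ j ∈ range (ν + 1), (Nat.choose (k - 1 + j) j : ℝ) * x ^ j)
    (hR : ∀ x : ℝ, R x = (1 - x) ^ k * Q x)
    (hg : ∀ x : ℝ, g x = R x + R (1 - x)) : ∀ x : ℝ, HasDerivAt g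
    (((k + ν : ℕ) : ℝ) * ((k - 1 + ν).choose ν : ℝ) *
      (x ^ (k - 1) * (1 - x) ^ ν - (1 - x) ^ (k - 1) * x ^ ν)) x := by
  intro x
  have hge : g = fun x => R x + R (1 - x) := funext hg
  rw [hge]
  have h1 : HasDerivAt (fun y : ℝ => 1 - y) (-1) x := (hasDerivAt_id x).const_sub 1
  have h2 := ((hRd k ν hk Q R hQ hR (1 - x)).comp x h1)
  have h3 := (hRd k ν hk Q R hQ hR x).add h2
  refine h3.congr_deriv (Eq.symm ?_)
  have : (1 : ℝ) - (1 - x) = x := by ring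
  rw [this]
  ring

end aux


open Finset Set in
/-- Properties of `R(x) = (1-x)^k Q(x)` and `g(x) = R(x) + R(1-x)` for the primal
pseudo-spline masks: derivative formula for `R`, monotonicity of `g`, and its
minimum and maximum on `[0,1]`. -/
theorem primal_pseudo_spline_extrema (k ν : ℕ) (hk : 1 ≤ k) (hν : ν ≤ k - 1)
    (Q R g : ℝ → ℝ)
    (hQ : ∀ x : ℝ, Q x = ∑ j ∈ range (ν + 1), (Nat.choose (k - 1 + j) j : ℝ) * x ^ j)
    (hR : ∀ x : ℝ, R x = (1 - x) ^ k * Q x)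
    (hg : ∀ x : ℝ, g x = R x + R (1 - x)) :
    (∀ x : ℝ, deriv R x
        = -((k + ν : ℕ) : ℝ) * (Nat.choose (k - 1 + ν) ν : ℝ) * (1 - x) ^ (k - 1) * x ^ ν) ∧
    AntitoneOn g (Icc 0 (1/2)) ∧
    MonotoneOn g (Icc (1/2) 1) ∧
    (∀ x ∈ Icc (0:ℝ) 1, g (1/2) ≤ g x) ∧
    g (1/2) = (2:ℝ) ^ (1 - (k:ℤ)) *
        ∑ j ∈ range (ν + 1), (Nat.choose (k - 1 + j) j : ℝ) * (2:ℝ) ^ (-(j:ℤ)) ∧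
    0 < g (1/2) ∧
    (∀ x ∈ Icc (0:ℝ) 1, g x ≤ 1) ∧
    g 0 = 1 ∧ g 1 = 1 := by
  have hRd' := hRd k ν hk Q R hQ hR
  have hgd' := hgd k ν hk Q R g hQ hR hg
  set K : ℝ := ((k + ν : ℕ) : ℝ) * ((k - 1 + ν).choose ν : ℝ) with hK
  have hKpos : 0 < K := by
    apply mul_pos
    · positivity
    · exact_mod_cast Nat.choose_pos (Nat.le_add_left ν (k - 1))
  set m := k - 1 - ν with hm
  have hkm : k - 1 = ν + m := by omega
  -- antitone on [0, 1/2]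
  have hanti : AntitoneOn g (Icc 0 (1/2)) := by
    apply antitoneOn_of_deriv_nonpos (convex_Icc _ _)
    · exact fun x _ => ((hgd' x).continuousAt).continuousWithinAt
    · exact fun x _ => ((hgd' x).differentiableAt).differentiableWithinAt
    · intro x hx
      rw [interior_Icc] at hx
      rw [(hgd' x).deriv]
      have hx0 : 0 < x := hx.1
      have hx1 : x ≤ 1 - x := by linarith [hx.2]
      have hle : x ^ (k - 1) * (1 - x) ^ ν ≤ (1 - x) ^ (k - 1) * x ^ ν := by
        rw [hkm, pow_add, pow_add]
        calc x ^ ν * x ^ m * (1 - x) ^ ν = (x ^ ν * (1 - x) ^ ν) * x ^ m := by ring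
          _ ≤ (x ^ ν * (1 - x) ^ ν) * (1 - x) ^ m := by
              apply mul_le_mul_of_nonneg_left (pow_le_pow_left₀ hx0.le hx1 m)
              exact mul_nonneg (pow_nonneg hx0.le ν) (pow_nonneg (by linarith) ν)
          _ = (1 - x) ^ ν * (1 - x) ^ m * x ^ ν := by ring
      have := mul_le_mul_of_nonneg_left (sub_nonpos.mpr hle) hKpos.le
      simpa using this
  -- monotone on [1/2, 1]
  have hmono : MonotoneOn g (Icc (1/2) 1) := by
    apply monotoneOn_of_deriv_nonneg (convex_Icc _ _)
    · exact fun x _ => ((hgd' x).continuousAt).continuousWithinAt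
    · exact fun x _ => ((hgd' x).differentiableAt).differentiableWithinAt
    · intro x hx
      rw [interior_Icc] at hx
      rw [(hgd' x).deriv]
      have hx0 : 0 ≤ 1 - x := by linarith [hx.2]
      have hx1 : 1 - x ≤ x := by linarith [hx.1]
      have hle : (1 - x) ^ (k - 1) * x ^ ν ≤ x ^ (k - 1) * (1 - x) ^ ν := by
        rw [hkm, pow_add, pow_add]
        calc (1 - x) ^ ν * (1 - x) ^ m * x ^ ν = (x ^ ν * (1 - x) ^ ν) * (1 - x) ^ m := by ring
          _ ≤ (x ^ ν * (1 - x) ^ ν) * x ^ m := by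
              apply mul_le_mul_of_nonneg_left (pow_le_pow_left₀ hx0 hx1 m)
              exact mul_nonneg (pow_nonneg (by linarith) ν) (pow_nonneg hx0 ν)
          _ = x ^ ν * x ^ m * (1 - x) ^ ν := by ring
      have := mul_le_mul_of_nonneg_left (sub_nonneg.mpr hle) hKpos.le
      simpa using this
  -- minimum
  have hmin : ∀ x ∈ Icc (0:ℝ) 1, g (1/2) ≤ g x := by
    intro x hx
    rcases le_total x (1/2) with h | h
    · exact hanti ⟨hx.1, h⟩ ⟨by norm_num, le_refl _⟩ h
    · exact hmono ⟨le_refl _, by norm_num⟩ ⟨h, hx.2⟩ h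
  -- g(1/2) formula
  have h12 : (1:ℝ) - 1/2 = 1/2 := by norm_num
  have ghalf : g (1/2) = (2:ℝ) ^ (1 - (k:ℤ)) *
      ∑ j ∈ range (ν + 1), (Nat.choose (k - 1 + j) j : ℝ) * (2:ℝ) ^ (-(j:ℤ)) := by
    have hz2 : (2:ℝ) ^ (1 - (k:ℤ)) = 2 * (1/2 : ℝ) ^ k := by
      rw [zpow_sub₀ (two_ne_zero), zpow_one, zpow_natCast, one_div, inv_pow]
      ring
    rw [hg, h12, hR, h12, hQ, hz2]
    rw [show ((1:ℝ)/2) ^ k * (∑ j ∈ range (ν + 1), ((k-1+j).choose j : ℝ) * (1/2:ℝ) ^ j)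
        + (1/2:ℝ) ^ k * (∑ j ∈ range (ν + 1), ((k-1+j).choose j : ℝ) * (1/2:ℝ) ^ j)
        = 2 * (1/2:ℝ) ^ k * (∑ j ∈ range (ν + 1), ((k-1+j).choose j : ℝ) * (1/2:ℝ) ^ j)
      from by ring]
    congr 1
    refine Finset.sum_congr rfl fun j _ => ?_
    rw [zpow_neg, zpow_natCast, one_div, inv_pow]
  -- positivity of g(1/2)
  have hpos : 0 < g (1/2) := by
    rw [ghalf]
    apply mul_pos
    · positivity
    · apply Finset.sum_pos
      · intro j _
        apply mul_pos
        · exact_mod_cast Nat.choose_pos (Nat.le_add_left j (k - 1))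
        · positivity
      · exact nonempty_range_add_one
  -- g 0 = 1, g 1 = 1
  have hQ0 : Q 0 = 1 := by
    rw [hQ]
    rw [Finset.sum_eq_single 0]
    · simp
    · intro j _ hj
      rw [zero_pow hj, mul_zero]
    · intro h
      exact absurd (Finset.mem_range.mpr (Nat.succ_pos ν)) h
  have hR0 : R 0 = 1 := by rw [hR]; simp [hQ0]
  have hR1 : R 1 = 0 := by
    rw [hR]
    have : (1:ℝ) - 1 = 0 := by ring
    rw [this, zero_pow (by omega : k ≠ 0), zero_mul]
  have hg0 : g 0 = 1 := by rw [hg]; norm_num [hR0, hR1]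
  have hg1 : g 1 = 1 := by rw [hg]; norm_num [hR0, hR1]
  -- maximum
  have hmax : ∀ x ∈ Icc (0:ℝ) 1, g x ≤ 1 := by
    intro x hx
    rcases le_total x (1/2) with h | h
    · have := hanti ⟨le_refl _, by norm_num⟩ ⟨hx.1, h⟩ hx.1
      rw [hg0] at this; exact this
    · have := hmono ⟨h, hx.2⟩ ⟨by norm_num, le_refl _⟩ hx.2
      rw [hg1] at this; exact this
  exact ⟨fun x => (hRd' x).deriv, hanti, hmono, hmin, ghalf, hpos, hmax, hg0, hg1⟩
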